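/- Let φ be a unital linear functional on ℝ⟨x₁,…,xₙ⟩ such that ⟨P,Q⟩ := φ(P*Q) is a positive semidefinite bilinear form, and suppose a monic polynomial family {P_u} indexed by words u is orthogonal with respect to φ (φ(P_u* P_v) = 0 for u ≠ v, including u = ∅ so that φ(P_u) = 0 for all nonempty u). Then φ is uniquely determined: any two unital functionals for which the same monic family {P_u} is orthogonal coincide. -/
import Mathlib

/-- The monomial `x_{u(1)} ⋯ x_{u(k)}` in the free algebra `ℝ⟨x₁,…,xₙ⟩`. -/
noncomputable def mono {n : ℕ} (u : List (Fin n)) : FreeAlgebra ℝ (Fin n) :=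
  (u.map (FreeAlgebra.ι ℝ)).prod

/-- The span of monomials of length (degree) `< k`: "lower-order terms". -/
noncomputable def lowerOrder (n k : ℕ) : Submodule ℝ (FreeAlgebra ℝ (Fin n)) :=
  Submodule.span ℝ {m | ∃ v : List (Fin n), v.length < k ∧ m = mono v}

/-- The monomial-reversing involution `*` on `ℝ⟨x₁,…,xₙ⟩`. -/
noncomputable def ncStar {n : ℕ} (P : FreeAlgebra ℝ (Fin n)) : FreeAlgebra ℝ (Fin n) :=
  MulOpposite.unop
    (FreeAlgebra.lift ℝ (fun i => MulOpposite.op (FreeAlgebra.ι ℝ i)) P)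

/-- A monic polynomial family: `P_∅ = 1` and `P_u = x_u + lower-order terms`. -/
def IsMonicFamily {n : ℕ} (P : List (Fin n) → FreeAlgebra ℝ (Fin n)) : Prop :=
  P [] = 1 ∧ ∀ u : List (Fin n), P u - mono u ∈ lowerOrder n u.length

lemma mono_nil {n : ℕ} : mono ([] : List (Fin n)) = 1 := rfl

lemma mono_append {n : ℕ} (u v : List (Fin n)) : mono (u ++ v) = mono u * mono v := by
  simp [mono]

lemma ncStar_one {n : ℕ} : ncStar (1 : FreeAlgebra ℝ (Fin n)) = 1 := by
  simp [ncStar]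

lemma monoSpan_top (n : ℕ) :
    Submodule.span ℝ {m : FreeAlgebra ℝ (Fin n) | ∃ v : List (Fin n), m = mono v} = ⊤ := by
  set s : Set (FreeAlgebra ℝ (Fin n)) := {m | ∃ v : List (Fin n), m = mono v} with hs
  rw [eq_top_iff]
  rintro x -
  induction x with
  | grade0 r =>
      rw [Algebra.algebraMap_eq_smul_one]
      exact Submodule.smul_mem _ _ (Submodule.subset_span ⟨[], rfl⟩)
  | grade1 i =>
      exact Submodule.subset_span ⟨[i], by simp [mono]⟩
  | add a b ha hb => exact Submodule.add_mem _ ha hb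
  | mul a b ha hb =>
      have h1 : a * b ∈ Submodule.span ℝ s * Submodule.span ℝ s :=
        Submodule.mul_mem_mul ha hb
      rw [Submodule.span_mul_span] at h1
      refine Submodule.span_mono ?_ h1
      rintro y ⟨c, ⟨u, rfl⟩, d, ⟨v, rfl⟩, rfl⟩
      exact ⟨u ++ v, (mono_append u v).symm⟩

/-- If a monic polynomial family `{P_u}` is orthogonal with respect to a unital
linear functional `φ` whose induced form `⟨P,Q⟩ = φ(P*Q)` is positive semidefinite, then `φ`
is uniquely determined: two such functionals sharing the orthogonal family coincide. -/
theorem state_of_orthogonality_unique (n : ℕ)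
    (P : List (Fin n) → FreeAlgebra ℝ (Fin n)) (hP : IsMonicFamily P)
    (φ ψ : FreeAlgebra ℝ (Fin n) →ₗ[ℝ] ℝ)
    (hφ1 : φ 1 = 1) (hψ1 : ψ 1 = 1)
    (hφpos : ∀ A : FreeAlgebra ℝ (Fin n), 0 ≤ φ (ncStar A * A))
    (hψpos : ∀ A : FreeAlgebra ℝ (Fin n), 0 ≤ ψ (ncStar A * A))
    (hφorth : ∀ u v : List (Fin n), u ≠ v → φ (ncStar (P u) * P v) = 0)
    (hψorth : ∀ u v : List (Fin n), u ≠ v → ψ (ncStar (P u) * P v) = 0) :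
    φ = ψ := by
  obtain ⟨hP1, hPlo⟩ := hP
  -- φ (P u) = 0 for u ≠ []
  have hφP : ∀ u : List (Fin n), u ≠ [] → φ (P u) = 0 := by
    intro u hu
    have := hφorth [] u (fun h => hu h.symm)
    rwa [hP1, ncStar_one, one_mul] at this
  have hψP : ∀ u : List (Fin n), u ≠ [] → ψ (P u) = 0 := by
    intro u hu
    have := hψorth [] u (fun h => hu h.symm)
    rwa [hP1, ncStar_one, one_mul] at this
  have key : ∀ k : ℕ, ∀ u : List (Fin n), u.length ≤ k → φ (mono u) = ψ (mono u) := by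
    intro k
    induction k with
    | zero =>
        intro u hu
        have : u = [] := List.length_eq_zero_iff.mp (Nat.le_zero.mp hu)
        subst this
        rw [mono_nil, hφ1, hψ1]
    | succ k ih =>
        intro u hu
        rcases eq_or_ne u [] with rfl | hne
        · rw [mono_nil, hφ1, hψ1]
        · have hlo := hPlo u
          have hEq : φ (P u - mono u) = ψ (P u - mono u) := by
            refine LinearMap.eqOn_span ?_ hlo
            rintro m ⟨v, hv, rfl⟩
            exact ih v (by omega)
          have h1 : φ (P u) - φ (mono u) = ψ (P u) - ψ (mono u) := by
            simpa [map_sub] using hEq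
          rw [hφP u hne, hψP u hne] at h1
          linarith
  refine LinearMap.ext_on (monoSpan_top n) ?_
  rintro m ⟨v, rfl⟩
  exact key v.length v le_rfl
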